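/- Let L ⊆ ℤⁿ be a lattice. If rank(L_pure) > 1, or if rank(L_pure) = 1 and L ≠ L_pure, then the Universal Markov basis of I_L (the union of all Markov bases of I_L) is infinite. -/

import Mathlib

open MvPolynomial

noncomputable section

/-- The integer vector associated to a natural exponent vector. -/
def natVec {ι : Type*} (u : ι →₀ ℕ) : ι → ℤ := fun i => (u i : ℤ)

/-- The lattice ideal `I_L` of a lattice `L ⊆ ℤ^ι` in `k[x_i : i ∈ ι]`. -/
def latticeIdeal (k : Type*) [Field k] {ι : Type*} (L : Submodule ℤ (ι → ℤ)) :
    Ideal (MvPolynomial ι k) :=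
  Ideal.span {f | ∃ u v : ι →₀ ℕ, natVec u - natVec v ∈ L ∧
    f = monomial u (1 : k) - monomial v 1}

/-- `f` is a binomial `x^u - x^v` belonging to the lattice ideal `I_L`. -/
def IsLatticeBinomial (k : Type*) [Field k] {ι : Type*} (L : Submodule ℤ (ι → ℤ))
    (f : MvPolynomial ι k) : Prop :=
  ∃ u v : ι →₀ ℕ, natVec u - natVec v ∈ L ∧ f = monomial u (1 : k) - monomial v 1

/-- The `I_L`-fiber of `u` : all exponent vectors `v` with `v - u ∈ L`. -/
def fiber {ι : Type*} (L : Submodule ℤ (ι → ℤ)) (u : ι →₀ ℕ) : Set (ι →₀ ℕ) :=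
  {v | natVec v - natVec u ∈ L}

/-- `L⁺ = L ∩ ℕ^ι`. -/
def Lplus {ι : Type*} (L : Submodule ℤ (ι → ℤ)) : Set (ι → ℤ) :=
  {w | w ∈ L ∧ ∀ i, 0 ≤ w i}

/-- `L_pure`, the subgroup of `L` generated by `L⁺`. -/
def Lpure {ι : Type*} (L : Submodule ℤ (ι → ℤ)) : Submodule ℤ (ι → ℤ) :=
  Submodule.span ℤ (Lplus L)

/-- `σ_L`, the union of the supports of elements of `L⁺`. -/
def sigmaL {ι : Type*} (L : Submodule ℤ (ι → ℤ)) : Set ι :=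
  {i | ∃ w ∈ Lplus L, w i ≠ 0}

/-- `F̄ ≤_I Ḡ` : some translate of `F` is contained in `G`. -/
def fiberLE {ι : Type*} (F G : Set (ι →₀ ℕ)) : Prop :=
  ∃ t : ι →₀ ℕ, (fun v => t + v) '' F ⊆ G

/-- `F ≡_I G` : equivalence of fibers. -/
def fiberEquiv {ι : Type*} (F G : Set (ι →₀ ℕ)) : Prop :=
  fiberLE F G ∧ fiberLE G F

/-- `F̄ <_I Ḡ`. -/
def fiberLT {ι : Type*} (F G : Set (ι →₀ ℕ)) : Prop :=
  fiberLE F G ∧ ¬ fiberEquiv F G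

/-- The ideal `I_{<F̄}` generated by binomials of `I_L` whose fiber class is `<_I F̄`. -/
def idealLT (k : Type*) [Field k] {ι : Type*} (L : Submodule ℤ (ι → ℤ))
    (F : Set (ι →₀ ℕ)) : Ideal (MvPolynomial ι k) :=
  Ideal.span {f | ∃ u v : ι →₀ ℕ, natVec u - natVec v ∈ L ∧
    f = monomial u (1 : k) - monomial v 1 ∧ fiberLT (fiber L u) F}

/-- The ideal `I_{≤F̄}` generated by binomials of `I_L` whose fiber class is `≤_I F̄`. -/
def idealLE (k : Type*) [Field k] {ι : Type*} (L : Submodule ℤ (ι → ℤ))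
    (F : Set (ι →₀ ℕ)) : Ideal (MvPolynomial ι k) :=
  Ideal.span {f | ∃ u v : ι →₀ ℕ, natVec u - natVec v ∈ L ∧
    f = monomial u (1 : k) - monomial v 1 ∧ fiberLE (fiber L u) F}

/-- `μ(I_L)` : the least cardinality of a binomial generating set of `I_L`. -/
def muIdeal (k : Type*) [Field k] {ι : Type*} (L : Submodule ℤ (ι → ℤ)) : ℕ :=
  sInf {m | ∃ S : Finset (MvPolynomial ι k), S.card = m ∧
    (∀ f ∈ S, IsLatticeBinomial k L f) ∧
    Ideal.span (S : Set (MvPolynomial ι k)) = latticeIdeal k L}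

/-- A Markov basis of `I_L` : a binomial generating set of least cardinality `μ(I_L)`. -/
def IsMarkovBasis (k : Type*) [Field k] {ι : Type*} (L : Submodule ℤ (ι → ℤ))
    (S : Finset (MvPolynomial ι k)) : Prop :=
  (∀ f ∈ S, IsLatticeBinomial k L f) ∧
  Ideal.span (S : Set (MvPolynomial ι k)) = latticeIdeal k L ∧
  S.card = muIdeal k L

/-- `u` is an `L`-primitive vector : `u ≠ 0`, `u ∈ L`, and whenever `q • u ∈ L` for
a rational `q`, then `q` is an integer. -/
def IsLPrimitive {ι : Type*} (L : Submodule ℤ (ι → ℤ)) (u : ι → ℤ) : Prop :=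
  u ≠ 0 ∧ u ∈ L ∧ ∀ (q : ℚ) (w : ι → ℤ), w ∈ L →
    (∀ i, (w i : ℚ) = q * (u i : ℚ)) → ∃ m : ℤ, q = (m : ℚ)

/-- Projection onto the coordinates in `σ_L`. -/
def projSigma {n : ℕ} (L : Submodule ℤ (Fin n → ℤ)) :
    (Fin n → ℤ) →ₗ[ℤ] ({i : Fin n // i ∈ sigmaL L} → ℤ) :=
  LinearMap.pi fun j => LinearMap.proj j.1

/-- Projection onto the coordinates outside `σ_L` (giving `u ↦ u^σ`). -/
def projCompl {n : ℕ} (L : Submodule ℤ (Fin n → ℤ)) :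
    (Fin n → ℤ) →ₗ[ℤ] ({i : Fin n // i ∉ sigmaL L} → ℤ) :=
  LinearMap.pi fun j => LinearMap.proj j.1

/-- An indispensable binomial: it appears, up to a constant multiple, in every Markov basis. -/
def IsIndispensableBinomial (k : Type*) [Field k] {ι : Type*} (L : Submodule ℤ (ι → ℤ))
    (f : MvPolynomial ι k) : Prop :=
  ∀ S : Finset (MvPolynomial ι k), IsMarkovBasis k L S → ∃ c : k, c ≠ 0 ∧ c • f ∈ S

/-- An indispensable monomial: every Markov basis contains a binomial having it as a term. -/
def IsIndispensableMonomial (k : Type*) [Field k] {ι : Type*} (L : Submodule ℤ (ι → ℤ))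
    (u : ι →₀ ℕ) : Prop :=
  ∀ S : Finset (MvPolynomial ι k), IsMarkovBasis k L S → ∃ f ∈ S, ∃ v : ι →₀ ℕ,
    f = monomial u (1 : k) - monomial v 1 ∨ f = monomial v (1 : k) - monomial u 1


section Aux

lemma natVec_zero {ι : Type*} : natVec (0 : ι →₀ ℕ) = 0 := by
  funext i; simp [natVec]

lemma natVec_add {ι : Type*} (u v : ι →₀ ℕ) : natVec (u + v) = natVec u + natVec v := by
  funext i; simp [natVec]

lemma natVec_smul {ι : Type*} (t : ℕ) (u : ι →₀ ℕ) :
    natVec (t • u) = (t : ℤ) • natVec u := by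
  funext i; simp [natVec, mul_comm]

lemma span_swap' {R : Type*} [CommRing R] [DecidableEq R] (S : Finset R) (f g g' : R)
    (hf : f ∈ S) (hg : g ∈ S) (hfg : f ≠ g) (hd : g' - g ∈ Ideal.span {f}) :
    Ideal.span ((insert g' (S.erase g) : Finset R) : Set R) = Ideal.span (S : Set R) := by
  have hfS : f ∈ Ideal.span (S : Set R) := Ideal.subset_span hf
  have hfS' : f ∈ Ideal.span ((insert g' (S.erase g) : Finset R) : Set R) :=
    Ideal.subset_span (by simp [Finset.mem_erase, hfg, hf])
  apply le_antisymm
  · rw [Ideal.span_le]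
    intro x hx
    simp only [Finset.coe_insert, Set.mem_insert_iff, Finset.mem_coe, Finset.mem_erase] at hx
    rcases hx with rfl | ⟨-, hx⟩
    · have : x = g + (x - g) := by ring
      rw [this]
      exact Ideal.add_mem _ (Ideal.subset_span hg)
        (((Ideal.span_singleton_le_iff_mem _).mpr hfS) hd)
    · exact Ideal.subset_span hx
  · rw [Ideal.span_le]
    intro x hx
    by_cases hxg : x = g
    · subst hxg
      have h1 : g' ∈ Ideal.span ((insert g' (S.erase x) : Finset R) : Set R) :=
        Ideal.subset_span (by simp)
      have h2 : g' - x ∈ Ideal.span ((insert g' (S.erase x) : Finset R) : Set R) :=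
        ((Ideal.span_singleton_le_iff_mem _).mpr hfS') hd
      have h3 := Ideal.sub_mem _ h1 h2
      simpa using h3
    · exact Ideal.subset_span (by simp [Finset.mem_erase, hxg, hx, Finset.mem_coe.mpr hx])

lemma exists_fin_gen (k : Type*) [Field k] {n : ℕ} (L : Submodule ℤ (Fin n → ℤ)) :
    ∃ T : Finset (MvPolynomial (Fin n) k), (∀ f ∈ T, IsLatticeBinomial k L f) ∧
      Ideal.span (T : Set (MvPolynomial (Fin n) k)) = latticeIdeal k L := by
  have hfg : (latticeIdeal k L).FG := IsNoetherian.noetherian _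
  classical
  obtain ⟨T0, hT0⟩ := hfg
  have key : ∀ t ∈ T0, ∃ T : Finset (MvPolynomial (Fin n) k),
      (T : Set (MvPolynomial (Fin n) k)) ⊆ {f | ∃ u v : Fin n →₀ ℕ, natVec u - natVec v ∈ L ∧
        f = monomial u (1 : k) - monomial v 1} ∧
        t ∈ Ideal.span (T : Set (MvPolynomial (Fin n) k)) := by
    intro t ht
    have : t ∈ latticeIdeal k L := by
      rw [← hT0]; exact Ideal.subset_span ht
    obtain ⟨T, hT1, hT2⟩ := Submodule.mem_span_finite_of_mem_span this
    exact ⟨T, hT1, hT2⟩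
  choose F hF1 hF2 using key
  refine ⟨T0.attach.biUnion (fun t => F t.1 t.2), ?_, ?_⟩
  · intro f hf
    simp only [Finset.mem_biUnion] at hf
    obtain ⟨t, -, hft⟩ := hf
    exact hF1 t.1 t.2 hft
  · apply le_antisymm
    · rw [Ideal.span_le]
      intro x hx
      simp only [Finset.coe_biUnion, Set.mem_iUnion, Finset.mem_coe] at hx
      obtain ⟨t, -, hxt⟩ := hx
      exact Ideal.subset_span (hF1 t.1 t.2 hxt)
    · rw [← hT0, Ideal.span_le]
      intro t ht
      refine Submodule.span_mono ?_ (hF2 t ht)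
      intro y hy
      simp only [Finset.coe_biUnion, Set.mem_iUnion, Finset.mem_coe]
      exact ⟨⟨t, ht⟩, Finset.mem_attach _ _, hy⟩

def phiHom (k : Type*) [Field k] {n : ℕ} (N : Submodule ℤ (Fin n → ℤ)) :
    MvPolynomial (Fin n) k →ₐ[k] AddMonoidAlgebra k ((Fin n → ℤ) ⧸ N) :=
  aeval (fun i => AddMonoidAlgebra.single (N.mkQ (Pi.single i 1)) (1 : k))

lemma phiHom_monomial (k : Type*) [Field k] {n : ℕ} (N : Submodule ℤ (Fin n → ℤ))
    (u : Fin n →₀ ℕ) :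
    phiHom k N (monomial u (1 : k)) = AddMonoidAlgebra.single (N.mkQ (natVec u)) 1 := by
  induction u using Finsupp.induction with
  | zero =>
    rw [monomial_zero', C_1, map_one, natVec_zero, map_zero]
    exact AddMonoidAlgebra.one_def
  | single_add a b v ha hb ih =>
    have hsplit : monomial (Finsupp.single a b + v) (1 : k) =
        monomial (Finsupp.single a b) 1 * monomial v 1 := by
      rw [monomial_mul, one_mul]
    rw [hsplit, map_mul, ih, ← X_pow_eq_monomial, map_pow]
    rw [phiHom, aeval_X]
    rw [AddMonoidAlgebra.single_pow, AddMonoidAlgebra.single_mul_single, one_pow, one_mul]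
    congr 1
    rw [← map_nsmul, ← map_add]
    congr 1
    funext j
    by_cases hja : j = a
    · simp [natVec, hja, Pi.single_apply, Finsupp.single_apply]
    · simp [natVec, hja, Pi.single_apply, Finsupp.single_apply, Ne.symm hja]

lemma L_le_span (k : Type*) [Field k] {n : ℕ} (L : Submodule ℤ (Fin n → ℤ)) (m : Fin n →₀ ℕ)
    (hsub : latticeIdeal k L ≤ Ideal.span {monomial m (1 : k) - monomial 0 1}) :
    L ≤ Submodule.span ℤ {natVec m} := by
  set N : Submodule ℤ (Fin n → ℤ) := Submodule.span ℤ {natVec m} with hN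
  intro l hl
  have hphif : phiHom k N (monomial m (1 : k) - monomial 0 1) = 0 := by
    rw [map_sub, phiHom_monomial, phiHom_monomial, natVec_zero, map_zero]
    have : N.mkQ (natVec m) = 0 := by
      rw [Submodule.mkQ_apply, Submodule.Quotient.mk_eq_zero]
      exact Submodule.mem_span_singleton_self _
    rw [this, sub_self]
  have hker : ∀ x ∈ Ideal.span {monomial m (1 : k) - monomial 0 1}, phiHom k N x = 0 := by
    intro x hx
    obtain ⟨c, hc⟩ := Ideal.mem_span_singleton.mp hx
    rw [hc, map_mul, hphif, zero_mul]
  set lp : Fin n →₀ ℕ := Finsupp.equivFunOnFinite.symm fun i => (l i).toNat with hlp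
  set ln : Fin n →₀ ℕ := Finsupp.equivFunOnFinite.symm fun i => (-(l i)).toNat with hln
  have hdiff : natVec lp - natVec ln = l := by
    funext i
    simp only [Pi.sub_apply, natVec, hlp, hln, Finsupp.equivFunOnFinite_symm_apply_apply]
    exact Int.toNat_sub_toNat_neg (l i)
  have hbin : (monomial lp (1 : k) - monomial ln 1) ∈ latticeIdeal k L :=
    Ideal.subset_span ⟨lp, ln, by rw [hdiff]; exact hl, rfl⟩
  have h0 := hker _ (hsub hbin)
  rw [map_sub, phiHom_monomial, phiHom_monomial, sub_eq_zero] at h0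
  have hq : N.mkQ (natVec lp) = N.mkQ (natVec ln) :=
    AddMonoidAlgebra.single_left_injective (one_ne_zero) h0
  rw [Submodule.mkQ_apply, Submodule.mkQ_apply, Submodule.Quotient.eq] at hq
  rwa [hdiff] at hq

end Aux

/-- if `rank L_pure > 1`, or `rank L_pure = 1` and `L ≠ L_pure`, then the
Universal Markov basis (the union of all Markov bases) of `I_L` is infinite. -/
theorem stmt15 (k : Type*) [Field k] {n : ℕ} (L : Submodule ℤ (Fin n → ℤ))
    (h : 1 < Module.finrank ℤ ↥(Lpure L) ∨
      (Module.finrank ℤ ↥(Lpure L) = 1 ∧ L ≠ Lpure L)) :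
    {f : MvPolynomial (Fin n) k | ∃ S : Finset (MvPolynomial (Fin n) k),
      IsMarkovBasis k L S ∧ f ∈ S}.Infinite := by
  classical
  -- basic μ facts
  have hMne : {m | ∃ S : Finset (MvPolynomial (Fin n) k), S.card = m ∧
      (∀ f ∈ S, IsLatticeBinomial k L f) ∧
      Ideal.span (S : Set (MvPolynomial (Fin n) k)) = latticeIdeal k L}.Nonempty := by
    obtain ⟨T, hTb, hTs⟩ := exists_fin_gen k L
    exact ⟨T.card, T, rfl, hTb, hTs⟩
  have hmu_le : ∀ T : Finset (MvPolynomial (Fin n) k),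
      (∀ f ∈ T, IsLatticeBinomial k L f) →
      Ideal.span (T : Set (MvPolynomial (Fin n) k)) = latticeIdeal k L →
      muIdeal k L ≤ T.card := fun T hb hs => Nat.sInf_le ⟨T, rfl, hb, hs⟩
  obtain ⟨S₀, hS₀card, hS₀b, hS₀s⟩ := Nat.sInf_mem hMne
  have hS₀ : IsMarkovBasis k L S₀ := ⟨hS₀b, hS₀s, hS₀card⟩
  -- a nonzero element of L⁺
  have hwex : ∃ w ∈ Lplus L, w ≠ 0 := by
    by_contra hcon
    push_neg at hcon
    have hbot : Lpure L = ⊥ := le_bot_iff.mp (Submodule.span_le.mpr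
      (fun w hwp => Submodule.mem_bot ℤ |>.mpr (hcon w hwp)))
    have hfr : Module.finrank ℤ ↥(Lpure L) = 0 := by
      rw [hbot]; exact finrank_bot ℤ _
    rcases h with h1 | ⟨h1, -⟩ <;> omega
  obtain ⟨w, ⟨hwL, hwpos⟩, hw0⟩ := hwex
  set uw : Fin n →₀ ℕ := Finsupp.equivFunOnFinite.symm fun i => (w i).toNat with huw
  have huw_nat : natVec uw = w := by
    funext i
    simp only [natVec, huw, Finsupp.equivFunOnFinite_symm_apply_apply]
    exact Int.toNat_of_nonneg (hwpos i)
  have hbw : (monomial uw (1 : k) - monomial 0 1) ∈ latticeIdeal k L :=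
    Ideal.subset_span ⟨uw, 0, by rw [natVec_zero, sub_zero, huw_nat]; exact hwL, rfl⟩
  have huw0 : uw ≠ 0 := by
    intro h0
    apply hw0
    rw [← huw_nat, h0, natVec_zero]
  -- some element of S₀ has nonzero constant coefficient
  have hfex : ∃ f ∈ S₀, constantCoeff f ≠ 0 := by
    by_contra hcon
    push_neg at hcon
    have hle : latticeIdeal k L ≤ RingHom.ker (constantCoeff (R := k) (σ := Fin n)) := by
      rw [← hS₀s, Ideal.span_le]
      intro x hx
      exact RingHom.mem_ker.mpr (hcon x hx)
    have := hle hbw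
    rw [RingHom.mem_ker, map_sub, constantCoeff_monomial, constantCoeff_monomial] at this
    simp [huw0] at this
  obtain ⟨f, hfS, hfc⟩ := hfex
  obtain ⟨a, b, habL, habf⟩ := hS₀b f hfS
  have hcases : (b = 0 ∧ a ≠ 0) ∨ (a = 0 ∧ b ≠ 0) := by
    rw [habf, map_sub, constantCoeff_monomial, constantCoeff_monomial] at hfc
    by_cases ha : a = 0 <;> by_cases hb : b = 0 <;> simp [ha, hb] at hfc ⊢
  obtain ⟨m, hmL, hm0, hfm⟩ : ∃ m : Fin n →₀ ℕ, natVec m ∈ L ∧ m ≠ 0 ∧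
      (f = monomial m (1 : k) - monomial 0 1 ∨ f = monomial 0 1 - monomial m 1) := by
    rcases hcases with ⟨hb0, ha0⟩ | ⟨ha0, hb0⟩
    · refine ⟨a, ?_, ha0, Or.inl (by rw [habf, hb0])⟩
      rw [hb0, natVec_zero, sub_zero] at habL
      exact habL
    · refine ⟨b, ?_, hb0, Or.inr (by rw [habf, ha0])⟩
      rw [ha0, natVec_zero, zero_sub] at habL
      simpa using L.neg_mem habL
  have hfspan : Ideal.span {f} = Ideal.span {monomial m (1 : k) - monomial 0 1} := by
    rcases hfm with hfm | hfm
    · rw [hfm]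
    · rw [hfm]
      have : monomial 0 (1 : k) - monomial m 1 = -(monomial m (1 : k) - monomial 0 1) := by ring
      rw [this, Ideal.span_singleton_neg]
  -- there is a second element g ≠ f in S₀
  have hgex : ∃ g ∈ S₀, g ≠ f := by
    by_contra hcon
    push_neg at hcon
    have hsub : latticeIdeal k L ≤ Ideal.span {monomial m (1 : k) - monomial 0 1} := by
      rw [← hfspan, ← hS₀s, Ideal.span_le]
      intro x hx
      rw [hcon x hx]
      exact Ideal.subset_span rfl
    have hLle : L ≤ Submodule.span ℤ {natVec m} := L_le_span k L m hsub
    have hmplus : natVec m ∈ Lplus L := ⟨hmL, fun i => by simp [natVec]⟩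
    have hpure_le : Lpure L ≤ L := Submodule.span_le.mpr (fun x hx => hx.1)
    have hspan_le : Submodule.span ℤ {natVec m} ≤ Lpure L :=
      Submodule.span_le.mpr (Set.singleton_subset_iff.mpr (Submodule.subset_span hmplus))
    have hLpure_eq : Lpure L = Submodule.span ℤ {natVec m} :=
      le_antisymm (le_trans hpure_le hLle) hspan_le
    have hLeq : L = Lpure L := le_antisymm (le_trans hLle hspan_le) hpure_le
    rcases h with h1 | ⟨-, h2⟩
    · have hrk : Module.rank ℤ ↥(Lpure L) ≤ 1 := by
        rw [hLpure_eq]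
        simpa using rank_span_le (R := ℤ) {natVec m}
      have hfr : Module.finrank ℤ ↥(Lpure L) ≤ 1 := by
        have := Cardinal.toNat_le_toNat hrk (by simp)
        simpa [Module.finrank] using this
      omega
    · exact h2 hLeq
  obtain ⟨g, hgS, hgf⟩ := hgex
  obtain ⟨p, q, hpqL, hgpq⟩ := hS₀b g hgS
  set G : ℕ → MvPolynomial (Fin n) k :=
    fun t => monomial p (1 : k) - monomial (q + t • m) 1 with hG
  have hGmem : ∀ t, ∃ S : Finset (MvPolynomial (Fin n) k),
      IsMarkovBasis k L S ∧ f ∈ S ∧ G t ∈ S ∧ f ≠ G t := by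
    intro t
    induction t with
    | zero =>
      have hG0 : G 0 = g := by
        rw [hG]
        simp only [zero_smul, add_zero]
        exact hgpq.symm
      exact ⟨S₀, hS₀, hfS, hG0 ▸ hgS, hG0 ▸ hgf.symm⟩
    | succ t ih =>
      obtain ⟨S, hS, hfSmem, hGtS, hfGt⟩ := ih
      have hsucc : q + (t + 1) • m = (q + t • m) + m := by
        rw [succ_nsmul, add_assoc]
      have p1 : monomial m (1 : k) * monomial (q + t • m) 1 = monomial ((q + t • m) + m) 1 := by
        rw [monomial_mul, one_mul, add_comm]
      have p2 : monomial (0 : Fin n →₀ ℕ) (1 : k) * monomial (q + t • m) 1 =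
          monomial (q + t • m) 1 := by
        rw [monomial_mul, one_mul, zero_add]
      have e1 : (monomial m (1 : k) - monomial 0 1) * (-(monomial (q + t • m) 1)) =
          monomial (q + t • m) 1 - monomial ((q + t • m) + m) 1 := by
        calc (monomial m (1 : k) - monomial 0 1) * (-(monomial (q + t • m) 1))
            = monomial 0 (1 : k) * monomial (q + t • m) 1 -
              monomial m 1 * monomial (q + t • m) 1 := by ring
          _ = monomial (q + t • m) 1 - monomial ((q + t • m) + m) 1 := by rw [p1, p2]
      have hdvd : G (t + 1) - G t ∈ Ideal.span {f} := by
        rw [hfspan, Ideal.mem_span_singleton]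
        refine ⟨-(monomial (q + t • m) 1), ?_⟩
        rw [e1, hG]
        simp only
        rw [hsucc]
        ring
      set S' := insert (G (t + 1)) (S.erase (G t)) with hS'
      have hfe : f ∈ S.erase (G t) := Finset.mem_erase.mpr ⟨hfGt, hfSmem⟩
      have hspan' : Ideal.span (S' : Set (MvPolynomial (Fin n) k)) = latticeIdeal k L := by
        rw [hS', span_swap' S f (G t) (G (t + 1)) hfSmem hGtS hfGt hdvd, hS.2.1]
      have hbin' : ∀ x ∈ S', IsLatticeBinomial k L x := by
        intro x hx
        rcases Finset.mem_insert.mp hx with rfl | hx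
        · refine ⟨p, q + (t + 1) • m, ?_, rfl⟩
          have heq : natVec p - natVec (q + (t + 1) • m) =
              (natVec p - natVec q) - ((t + 1 : ℕ) : ℤ) • natVec m := by
            rw [natVec_add, natVec_smul]
            ring
          rw [heq]
          exact L.sub_mem hpqL (L.smul_mem _ hmL)
        · exact hS.1 x (Finset.mem_of_mem_erase hx)
      have hpos : 0 < S.card := Finset.card_pos.mpr ⟨G t, hGtS⟩
      have hcard_le : S'.card ≤ S.card := by
        refine le_trans (Finset.card_insert_le _ _) ?_
        rw [Finset.card_erase_of_mem hGtS]
        omega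
      have hmu_le' := hmu_le S' hbin' hspan'
      have hScard : S.card = muIdeal k L := hS.2.2
      have hcard' : S'.card = muIdeal k L :=
        le_antisymm (hScard ▸ hcard_le) hmu_le'
      have hS'mb : IsMarkovBasis k L S' := ⟨hbin', hspan', hcard'⟩
      have hnotmem : G (t + 1) ∉ S.erase (G t) := by
        intro hmem
        have hself : S' = S.erase (G t) := by
          rw [hS']
          exact Finset.insert_eq_self.mpr hmem
        rw [hself, Finset.card_erase_of_mem hGtS] at hcard'
        omega
      exact ⟨S', hS'mb, Finset.mem_insert_of_mem hfe, Finset.mem_insert_self _ _,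
        fun hh => hnotmem (hh ▸ hfe)⟩
  apply Set.infinite_of_injective_forall_mem (f := G)
  · intro t1 t2 h12
    have hmono : monomial (q + t1 • m) (1 : k) = monomial (q + t2 • m) 1 :=
      sub_right_injective h12
    rcases (monomial_eq_monomial_iff _ _ _ _).mp hmono with ⟨heq, -⟩ | ⟨h1, -⟩
    · have hmm : t1 • m = t2 • m := add_left_cancel heq
      obtain ⟨i, hi⟩ := Finsupp.ne_iff.mp hm0
      have hmi : 0 < m i := Nat.pos_of_ne_zero (by simpa using hi)
      have happ : t1 * m i = t2 * m i := by
        have := congrArg (fun u : Fin n →₀ ℕ => u i) hmm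
        simpa [Finsupp.smul_apply] using this
      exact Nat.eq_of_mul_eq_mul_right hmi happ
    · exact absurd h1 one_ne_zero
  · intro t
    obtain ⟨S, hS, -, hGt, -⟩ := hGmem t
    exact ⟨S, hS, hGt⟩
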